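/- Let $x^* \in \mathbb{R}^2 \setminus \{0\}$ with $\angle x^* = 0$ (i.e., $x^* = (|x^*|, 0)$), and let $x \in \mathbb{R}^2$ with $x \ne x^*$, polar coordinates $(|x|, \angle x)$. Define $r_* = |x - x^*|$ and $\theta_* = \pi - \arcsin\left(\frac{|x|\sin|\angle x|}{r_*}\right)$ if $|x|\cos(\angle x) > |x^*|$, else $\theta_* = \arcsin\left(\frac{|x|\sin|\angle x|}{r_*}\right)$. Then $r_*^2 = |x|^2 + |x^*|^2 - 2|x||x^*|\cos(\angle x)$, and the quantity $|\mathcal{A}| = r_*^2(|\angle x| + \theta_*) - |x^*|^2 |\angle x| + |x||x^*|\sin|\angle x|$ is nonnegative and satisfies $|\mathcal{A}| \le \pi r_*^2$. -/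

import Mathlib

open Real

/-- A point of the Euclidean plane given by its Cartesian coordinates. -/
noncomputable def pt (a b : ℝ) : EuclideanSpace ℝ (Fin 2) := WithLp.toLp 2 ![a, b]

/-- Consistency of the lune-area formula of Lemma 2: with `x^* = (a,0)`, `a > 0`, and
`x = (ρ cos φ, ρ sin φ) ≠ x^*`, the law of cosines holds for `r_* = |x - x^*|`, and the
closed-form area `|𝒜| = r_*²(|φ| + θ_*) - a²|φ| + ρ a sin|φ|` satisfies `0 ≤ |𝒜| ≤ π r_*²`. -/
private lemma lune_aux_key1 (a ρ c s t rstar θ : ℝ) (ha : 0 < a) (hρ : 0 ≤ ρ)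
    (ht0 : 0 ≤ t) (hs0 : 0 ≤ s) (hst : s ≤ t) (htc : t * c ≤ s)
    (hr2 : rstar^2 = ρ^2 + a^2 - 2*ρ*a*c) (hrpos : 0 < rstar)
    (htri3 : a - ρ ≤ rstar) (hθ0 : 0 ≤ θ)
    (hθs : rstar * (ρ * s) ≤ rstar^2 * θ) :
    a^2 * t ≤ rstar^2 * (t + θ) + ρ * a * s := by
  rcases le_or_gt (a^2) (rstar^2) with hle | hgt
  · have d1 : a^2 * t ≤ rstar^2 * t := mul_le_mul_of_nonneg_right hle ht0
    have d2 : 0 ≤ rstar^2 * θ := mul_nonneg (sq_nonneg _) hθ0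
    have d3 : 0 ≤ ρ * a * s := mul_nonneg (mul_nonneg hρ ha.le) hs0
    nlinarith [d1, d2, d3]
  · have hρ2 : 0 < ρ * (2*a*c - ρ) := by nlinarith
    have hchain : t * (2*a*c - ρ) ≤ s * (rstar + a) := by
      have e1 : 2*a*(t*c) ≤ 2*a*s := by nlinarith
      have e2 : ρ*s ≤ ρ*t := mul_le_mul_of_nonneg_left hst hρ
      have e3 : 0 ≤ s * (rstar + ρ - a) := mul_nonneg hs0 (by linarith)
      nlinarith [e1, e2, e3]
    have d1 : ρ * (t * (2*a*c - ρ)) ≤ ρ * (s * (rstar + a)) :=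
      mul_le_mul_of_nonneg_left hchain hρ
    have e0 : a^2 * t - rstar^2 * t = ρ * (t * (2*a*c - ρ)) := by
      rw [hr2]; ring
    nlinarith [d1, e0, hθs]

private lemma lune_aux_key2 (a ρ s t rstar θ : ℝ) (ha : 0 < a) (hρ : 0 ≤ ρ)
    (hs0 : 0 ≤ s) (hst : s ≤ t) (hrpos : 0 < rstar) (htri2 : ρ - a ≤ rstar)
    (h2 : a * s ≤ (π - t - θ) * rstar) :
    ρ * a * s ≤ a^2 * t + rstar^2 * (π - t - θ) := by
  have c1 : rstar * (a * s) ≤ rstar * ((π - t - θ) * rstar) :=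
    mul_le_mul_of_nonneg_left h2 hrpos.le
  have c2 : 0 ≤ (a + rstar - ρ) * (a * s) :=
    mul_nonneg (by linarith) (mul_nonneg ha.le hs0)
  have c3 : a^2 * s ≤ a^2 * t := mul_le_mul_of_nonneg_left hst (sq_nonneg a)
  nlinarith [c1, c2, c3]

set_option maxHeartbeats 1000000 in
theorem lune_area_consistency (a ρ φ : ℝ) (ha : 0 < a) (hρ : 0 ≤ ρ)
    (hφ : φ ∈ Set.Ico (-π) π)
    (x : EuclideanSpace ℝ (Fin 2)) (hx : x = pt (ρ * Real.cos φ) (ρ * Real.sin φ))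
    (hne : x ≠ pt a 0)
    (rstar : ℝ) (hrstar : rstar = ‖x - pt a 0‖)
    (θstar : ℝ)
    (hθstar : θstar = if ρ * Real.cos φ > a
      then π - Real.arcsin (ρ * Real.sin |φ| / rstar)
      else Real.arcsin (ρ * Real.sin |φ| / rstar))
    (A : ℝ) (hA : A = rstar^2 * (|φ| + θstar) - a^2 * |φ| + ρ * a * Real.sin |φ|) :
    rstar^2 = ρ^2 + a^2 - 2*ρ*a*Real.cos φ ∧ 0 ≤ A ∧ A ≤ π * rstar^2 := by
  set t : ℝ := |φ| with ht
  set s : ℝ := Real.sin t with hs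
  set c : ℝ := Real.cos φ with hcdef
  have ht0 : 0 ≤ t := abs_nonneg φ
  have htπ : t ≤ π := abs_le.mpr ⟨hφ.1, le_of_lt hφ.2⟩
  have hct : Real.cos t = c := Real.cos_abs φ
  have hst' : Real.sin t = s := hs.symm
  have hs0 : 0 ≤ s := Real.sin_nonneg_of_nonneg_of_le_pi ht0 htπ
  have hst : s ≤ t := by rw [hs]; exact Real.sin_le ht0
  have hsc : s^2 + c^2 = 1 := by rw [← hct, hs]; exact Real.sin_sq_add_cos_sq t
  have hsinφ : (Real.sin φ)^2 = s^2 := by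
    have := Real.sin_sq_add_cos_sq φ
    nlinarith [hsc]
  -- t * c ≤ s
  have htc : t * c ≤ s := by
    rcases le_or_gt c 0 with hcle | hcgt
    · nlinarith
    · have htlt : t < π/2 := by
        by_contra hcon
        push_neg at hcon
        have : Real.cos t ≤ 0 :=
          Real.cos_nonpos_of_pi_div_two_le_of_le hcon (by linarith)
        rw [hct] at this; linarith
      rcases eq_or_lt_of_le ht0 with h0 | h0
      · rw [hs, ← h0]; simp
      · have h1 := Real.lt_tan h0 htlt
        rw [Real.tan_eq_sin_div_cos, hct, ← hs] at h1
        calc t * c ≤ (s / c) * c := by nlinarith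
          _ = s := by field_simp
  clear_value t s c
  have hr2 : rstar^2 = ρ^2 + a^2 - 2*ρ*a*c := by
    have h1 : rstar^2 = (ρ * c - a)^2 + (ρ * Real.sin φ - 0)^2 := by
      rw [hrstar, hx]
      simp [pt, EuclideanSpace.norm_eq, Fin.sum_univ_two]
      rw [Real.sq_sqrt (by positivity)]
    rw [h1]; nlinarith [hsinφ, hsc]
  have hrpos : 0 < rstar := by
    rw [hrstar]
    exact norm_pos_iff.mpr (sub_ne_zero.mpr hne)
  have hgoal1 : rstar^2 = ρ^2 + a^2 - 2*ρ*a*Real.cos φ := by rw [hr2, hcdef]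
  clear hx hrstar hne hφ hsinφ ht hs hcdef
  clear x
  have hc1 : c ≤ 1 := by nlinarith [sq_nonneg s]
  have hc2 : -1 ≤ c := by nlinarith [sq_nonneg s]
  have hρa1 : 0 ≤ ρ * a * (1 + c) :=
    mul_nonneg (mul_nonneg hρ ha.le) (by linarith)
  have hρa2 : 0 ≤ ρ * a * (1 - c) :=
    mul_nonneg (mul_nonneg hρ ha.le) (by linarith)
  have htri1 : rstar ≤ ρ + a := by
    have h1 : rstar^2 ≤ (ρ+a)^2 := by nlinarith
    calc rstar = √(rstar^2) := (Real.sqrt_sq hrpos.le).symm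
      _ ≤ √((ρ+a)^2) := Real.sqrt_le_sqrt h1
      _ = ρ + a := Real.sqrt_sq (by linarith)
  have htri23 : |ρ - a| ≤ rstar := by
    have h1 : (ρ-a)^2 ≤ rstar^2 := by nlinarith
    calc |ρ - a| = √((ρ-a)^2) := (Real.sqrt_sq_eq_abs _).symm
      _ ≤ √(rstar^2) := Real.sqrt_le_sqrt h1
      _ = rstar := Real.sqrt_sq hrpos.le
  obtain ⟨htri2', htri3'⟩ := abs_le.mp htri23
  have htri2 : ρ - a ≤ rstar := htri3'
  have htri3 : a - ρ ≤ rstar := by linarith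
  have hρs : ρ * s ≤ rstar := by nlinarith [sq_nonneg (ρ*c - a)]
  have hrne : rstar ≠ 0 := ne_of_gt hrpos
  have hu0 : 0 ≤ ρ * s / rstar := by positivity
  have hu1 : ρ * s / rstar ≤ 1 := by rw [div_le_one hrpos]; exact hρs
  have hsin_as : Real.sin (Real.arcsin (ρ * s / rstar)) = ρ * s / rstar :=
    Real.sin_arcsin (by linarith) hu1
  have hcos_as : Real.cos (Real.arcsin (ρ * s / rstar)) = |ρ*c - a| / rstar := by
    rw [Real.cos_arcsin]
    have h : 1 - (ρ * s / rstar)^2 = ((ρ*c - a)/rstar)^2 := by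
      rw [div_pow, div_pow, eq_div_iff (pow_ne_zero 2 hrne), sub_mul, one_mul,
        div_mul_cancel₀ _ (pow_ne_zero 2 hrne)]
      nlinarith [hsc]
    rw [h, Real.sqrt_sq_eq_abs, abs_div, abs_of_pos hrpos]
  have hsθ : Real.sin θstar = ρ * s / rstar := by
    rw [hθstar]
    split_ifs with h
    · rw [Real.sin_pi_sub]; exact hsin_as
    · exact hsin_as
  have hcθ : Real.cos θstar = (a - ρ*c) / rstar := by
    rw [hθstar]
    split_ifs with h
    · rw [Real.cos_pi_sub, hcos_as, abs_of_pos (by linarith)]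
      ring_nf
    · rw [hcos_as, abs_of_nonpos (by push_neg at h; linarith)]
      ring_nf
  have hθ0 : 0 ≤ θstar := by
    rw [hθstar]
    split_ifs with h
    · have h1 := Real.arcsin_le_pi_div_two (ρ * s / rstar)
      have h2 := Real.pi_pos
      linarith
    · exact Real.arcsin_nonneg.mpr hu0
  have hθπ : θstar ≤ π := by
    rw [hθstar]
    split_ifs with h
    · have h1 : 0 ≤ Real.arcsin (ρ * s / rstar) := Real.arcsin_nonneg.mpr hu0
      linarith
    · have h1 := Real.arcsin_le_pi_div_two (ρ * s / rstar)
      have h2 := Real.pi_pos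
      linarith
  -- t + θstar ≤ π
  have hsum : t + θstar ≤ π := by
    by_contra hcon
    push_neg at hcon
    have h1 : π - t < θstar := by linarith
    have h2 : Real.cos θstar < Real.cos (π - t) := by
      apply Real.strictAntiOn_cos ⟨by linarith [Real.pi_pos], by linarith⟩ ⟨hθ0, hθπ⟩ h1
    rw [Real.cos_pi_sub, hct, hcθ, div_lt_iff₀ hrpos] at h2
    have h3 : c * (ρ - rstar) ≤ |ρ - rstar| := by
      calc c * (ρ - rstar) ≤ |c * (ρ - rstar)| := le_abs_self _
        _ = |c| * |ρ - rstar| := abs_mul _ _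
        _ ≤ 1 * |ρ - rstar| :=
            mul_le_mul_of_nonneg_right (abs_le.mpr ⟨hc2, hc1⟩) (abs_nonneg _)
        _ = |ρ - rstar| := one_mul _
    have h4 : |ρ - rstar| ≤ a := abs_le.mpr ⟨by linarith, by linarith⟩
    nlinarith [h2, h3, h4]
  -- sin(t + θstar) = a * s / rstar
  have hsin_sum : Real.sin (t + θstar) = a * s / rstar := by
    rw [Real.sin_add, hct, hst', hsθ, hcθ]
    field_simp
    ring
  -- Goal 2
  have key2 : ρ * a * s ≤ a^2 * t + rstar^2 * (π - t - θstar) := by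
    have h1 : 0 ≤ π - t - θstar := by linarith
    have h2 : Real.sin (π - t - θstar) ≤ π - t - θstar := Real.sin_le h1
    have h3 : Real.sin (π - t - θstar) = a * s / rstar := by
      rw [show π - t - θstar = π - (t + θstar) by ring, Real.sin_pi_sub, hsin_sum]
    rw [h3, div_le_iff₀ hrpos] at h2
    exact lune_aux_key2 a ρ s t rstar θstar ha hρ hs0 hst hrpos htri2 h2
  -- Goal 1
  have key1 : a^2 * t ≤ rstar^2 * (t + θstar) + ρ * a * s := by
    have hθs : rstar * (ρ * s) ≤ rstar^2 * θstar := by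
      have h5 : Real.sin θstar ≤ θstar := Real.sin_le hθ0
      rw [hsθ, div_le_iff₀ hrpos] at h5
      nlinarith [mul_le_mul_of_nonneg_left h5 hrpos.le]
    exact lune_aux_key1 a ρ c s t rstar θstar ha hρ ht0 hs0 hst htc hr2 hrpos
      htri3 hθ0 hθs
  refine ⟨hr2, ?_, ?_⟩
  · rw [hA]; linarith [key1]
  · rw [hA]; linarith [key2]
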